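/- Let A ∈ ℝ^{n×n}, B ∈ ℝ^{n×m}, t0 < tf, x0, xf ∈ ℝ^n, and suppose the controllability Gramian G := ∫_{t0}^{tf} exp((tf−τ)A)·B·Bᵀ·exp(−(τ−t0)Aᵀ) dτ is invertible. For u⁻ ∈ L²([t0,tf];ℝ^m), set y(tf) := exp((tf−t0)A)·x0 + ∫_{t0}^{tf} exp((tf−τ)A)·B·u⁻(τ) dτ and λ̄ := G⁻¹·(y(tf) − xf). Then the function P(t) := u⁻(t) − Bᵀ·exp(−(t−t0)Aᵀ)·λ̄ is the metric projection of u⁻ onto 𝒜: P ∈ 𝒜 and ‖u⁻ − P‖_{L²} ≤ ‖u⁻ − y‖_{L²} for every y ∈ 𝒜. -/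

import Mathlib

open MeasureTheory Matrix

attribute [local instance] Matrix.normedAddCommGroup Matrix.normedSpace

open scoped ENNReal
set_option maxHeartbeats 1000000


lemma contExpAux {k : ℕ} (A : Matrix (Fin k) (Fin k) ℝ) {c : ℝ → ℝ} (hc : Continuous c) :
    Continuous fun t : ℝ => NormedSpace.exp (c t • A) := by
  letI : NormedRing (Matrix (Fin k) (Fin k) ℝ) := Matrix.linftyOpNormedRing
  letI : NormedAlgebra ℝ (Matrix (Fin k) (Fin k) ℝ) := Matrix.linftyOpNormedAlgebra
  letI : NormedAlgebra ℚ (Matrix (Fin k) (Fin k) ℝ) := NormedAlgebra.restrictScalars ℚ ℝ _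
  haveI : CompleteSpace (Matrix (Fin k) (Fin k) ℝ) := (inferInstance : CompleteSpace (Fin k → Fin k → ℝ))
  exact (@NormedSpace.exp_continuous (Matrix (Fin k) (Fin k) ℝ) _ _ this).comp (hc.smul continuous_const)

lemma finiteAux {a b : ℝ} {s : Set ℝ} (hsub : s ⊆ Set.Icc a b) :
    IsFiniteMeasure (volume.restrict s) :=
  ⟨by
    rw [Measure.restrict_apply_univ]
    exact lt_of_le_of_lt (measure_mono hsub) measure_Icc_lt_top⟩

lemma memContAux {E : Type*} [NormedAddCommGroup E] {f : ℝ → E} (hf : Continuous f)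
    (p : ℝ≥0∞) {a b : ℝ} {s : Set ℝ} (hs : MeasurableSet s) (hsub : s ⊆ Set.Icc a b) :
    MemLp f p (volume.restrict s) := by
  haveI := finiteAux hsub
  obtain ⟨C, hC⟩ := (isCompact_Icc (a := a) (b := b)).exists_bound_of_continuousOn
    hf.continuousOn
  refine MemLp.of_bound hf.aestronglyMeasurable C ?_
  filter_upwards [ae_restrict_mem hs] with x hx using hC x (hsub hx)

lemma intContAux {E : Type*} [NormedAddCommGroup E] {f : ℝ → E} (hf : Continuous f)
    {a b : ℝ} {s : Set ℝ} (hs : MeasurableSet s) (hsub : s ⊆ Set.Icc a b) :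
    Integrable f (volume.restrict s) := by
  haveI := finiteAux hsub
  exact (memContAux hf 1 hs hsub).integrable le_rfl

lemma integrable_mulVecAux {k l : ℕ} {M : ℝ → Matrix (Fin k) (Fin l) ℝ} (hM : Continuous M)
    {w : ℝ → Fin l → ℝ} {a b : ℝ} {s : Set ℝ} (hs : MeasurableSet s) (hsub : s ⊆ Set.Icc a b)
    (hw : Integrable w (volume.restrict s)) :
    Integrable (fun t => (M t).mulVec (w t)) (volume.restrict s) := by
  have heq : (fun t => (M t).mulVec (w t))
      = fun t => ∑ j, (w t j) • (fun i => M t i j) := by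
    funext t
    funext i
    simp [Matrix.mulVec, dotProduct, Finset.sum_apply, mul_comm]
  rw [heq]
  refine integrable_finset_sum _ fun j _ => ?_
  have hwj : Integrable (fun t => w t j) (volume.restrict s) :=
    (ContinuousLinearMap.proj (R := ℝ) (φ := fun _ : Fin l => ℝ) j).integrable_comp hw
  have hcol : Continuous fun t => (fun i => M t i j) :=
    continuous_pi fun i => (continuous_apply j).comp ((continuous_apply i).comp hM)
  exact hwj.smul_of_top_left (memContAux hcol ⊤ hs hsub)

noncomputable def mulVecCLM {k l : ℕ} (C : Matrix (Fin k) (Fin l) ℝ) :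
    (Fin l → ℝ) →L[ℝ] (Fin k → ℝ) :=
  LinearMap.toContinuousLinearMap (Matrix.mulVecLin C)

@[simp] lemma mulVecCLM_apply {k l : ℕ} (C : Matrix (Fin k) (Fin l) ℝ) (x : Fin l → ℝ) :
    mulVecCLM C x = C.mulVec x := rfl

noncomputable def mulVecRightCLM {k l : ℕ} (lam : Fin l → ℝ) :
    Matrix (Fin k) (Fin l) ℝ →L[ℝ] (Fin k → ℝ) :=
  LinearMap.toContinuousLinearMap
    { toFun := fun N => N.mulVec lam
      map_add' := fun X Y => Matrix.add_mulVec X Y lam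
      map_smul' := fun c X => Matrix.smul_mulVec c X lam }

@[simp] lemma mulVecRightCLM_apply {k l : ℕ} (lam : Fin l → ℝ) (N : Matrix (Fin k) (Fin l) ℝ) :
    mulVecRightCLM lam N = N.mulVec lam := rfl

noncomputable def dotCLM {k : ℕ} (lam : Fin k → ℝ) : (Fin k → ℝ) →L[ℝ] ℝ :=
  LinearMap.toContinuousLinearMap
    { toFun := fun z => lam ⬝ᵥ z
      map_add' := fun x y => dotProduct_add lam x y
      map_smul' := fun c x => by simp [dotProduct_smul, smul_eq_mul] }

@[simp] lemma dotCLM_apply {k : ℕ} (lam : Fin k → ℝ) (z : Fin k → ℝ) :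
    dotCLM lam z = lam ⬝ᵥ z := rfl




/-- If the controllability Gramian `G` is invertible, then with
`λ̄ = G⁻¹ (y(tf) - xf)` the function `P(t) = u⁻(t) - Bᵀ exp(-(t - t0) Aᵀ) λ̄` is the
metric projection of `u⁻` onto the feasible affine set
`𝒜 = {u ∈ L² : exp((tf - t0) A) x0 + ∫ exp((tf - τ) A) B u(τ) dτ = xf}`. -/
theorem projection_onto_affine_set
    (n m : ℕ) (A : Matrix (Fin n) (Fin n) ℝ) (B : Matrix (Fin n) (Fin m) ℝ)
    (t0 tf : ℝ) (ht : t0 < tf) (x0 xf : Fin n → ℝ)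
    (G : Matrix (Fin n) (Fin n) ℝ)
    (hG : G = ∫ τ in t0..tf,
      NormedSpace.exp ((tf - τ) • A) * B * Bᵀ * NormedSpace.exp ((-(τ - t0)) • Aᵀ))
    (hGinv : IsUnit G)
    (u : ℝ → Fin m → ℝ)
    (hu : MemLp u 2 (volume.restrict (Set.Icc t0 tf)))
    (ytf : Fin n → ℝ)
    (hytf : ytf = (NormedSpace.exp ((tf - t0) • A)).mulVec x0 +
      ∫ τ in t0..tf, (NormedSpace.exp ((tf - τ) • A)).mulVec (B.mulVec (u τ)))
    (lam : Fin n → ℝ) (hlam : lam = G⁻¹.mulVec (ytf - xf))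
    (P : ℝ → Fin m → ℝ)
    (hP : ∀ t, P t = u t - (Bᵀ).mulVec ((NormedSpace.exp ((-(t - t0)) • Aᵀ)).mulVec lam)) :
    (MemLp P 2 (volume.restrict (Set.Icc t0 tf)) ∧
      (NormedSpace.exp ((tf - t0) • A)).mulVec x0 +
        (∫ τ in t0..tf, (NormedSpace.exp ((tf - τ) • A)).mulVec (B.mulVec (P τ))) = xf) ∧
    ∀ y : ℝ → Fin m → ℝ,
      MemLp y 2 (volume.restrict (Set.Icc t0 tf)) →
      (NormedSpace.exp ((tf - t0) • A)).mulVec x0 +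
        (∫ τ in t0..tf, (NormedSpace.exp ((tf - τ) • A)).mulVec (B.mulVec (y τ))) = xf →
      (∫ t in t0..tf, ∑ i, (u t i - P t i) ^ 2) ≤ ∫ t in t0..tf, ∑ i, (u t i - y t i) ^ 2 := by
  have hsub : Set.Ioc t0 tf ⊆ Set.Icc t0 tf := Set.Ioc_subset_Icc_self
  have hsm : MeasurableSet (Set.Ioc t0 tf) := measurableSet_Ioc
  haveI : IsFiniteMeasure (volume.restrict (Set.Ioc t0 tf)) := finiteAux hsub
  haveI : IsFiniteMeasure (volume.restrict (Set.Icc t0 tf)) :=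
    finiteAux (Set.Subset.refl (Set.Icc t0 tf))
  have hEcont : Continuous fun τ : ℝ => NormedSpace.exp ((tf - τ) • A) :=
    contExpAux A (continuous_const.sub continuous_id)
  have hMcont : Continuous fun t : ℝ => NormedSpace.exp ((-(t - t0)) • Aᵀ) :=
    contExpAux Aᵀ ((continuous_id.sub continuous_const).neg)
  set v : ℝ → Fin m → ℝ :=
    fun t => (Bᵀ * NormedSpace.exp ((-(t - t0)) • Aᵀ)).mulVec lam with hv_def
  have hvcont : Continuous v := by
    have h1 : Continuous fun t : ℝ => Bᵀ * NormedSpace.exp ((-(t - t0)) • Aᵀ) :=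
      continuous_const.matrix_mul hMcont
    exact (mulVecRightCLM (k := m) lam).continuous.comp h1
  have hPv : ∀ t, P t = u t - v t := by
    intro t
    show P t = u t - (Bᵀ * NormedSpace.exp ((-(t - t0)) • Aᵀ)).mulVec lam
    rw [hP t, Matrix.mulVec_mulVec]
  have hu_int : Integrable u (volume.restrict (Set.Ioc t0 tf)) :=
    (hu.integrable one_le_two).mono_measure (Measure.restrict_mono hsub le_rfl)
  have hv_mem2 : MemLp v 2 (volume.restrict (Set.Icc t0 tf)) :=
    memContAux hvcont 2 measurableSet_Icc (Set.Subset.refl _)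
  have hP_mem : MemLp P 2 (volume.restrict (Set.Icc t0 tf)) := by
    have hPuv : P = u - v := funext hPv
    rw [hPuv]
    exact hu.sub hv_mem2
  have hP_int : Integrable P (volume.restrict (Set.Ioc t0 tf)) :=
    (hP_mem.integrable one_le_two).mono_measure (Measure.restrict_mono hsub le_rfl)
  have hv_int : Integrable v (volume.restrict (Set.Ioc t0 tf)) :=
    intContAux hvcont hsm hsub
  have hEB_cont : Continuous fun τ : ℝ => NormedSpace.exp ((tf - τ) • A) * B :=
    hEcont.matrix_mul continuous_const
  -- conversion of the interval integrals
  have hconv : ∀ z : ℝ → Fin m → ℝ,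
      (∫ τ in t0..tf, (NormedSpace.exp ((tf - τ) • A)).mulVec (B.mulVec (z τ)))
        = ∫ τ, (NormedSpace.exp ((tf - τ) • A) * B).mulVec (z τ)
            ∂(volume.restrict (Set.Ioc t0 tf)) := by
    intro z
    rw [intervalIntegral.integral_of_le ht.le]
    simp only [Matrix.mulVec_mulVec]
  have hFu_int : Integrable (fun τ => (NormedSpace.exp ((tf - τ) • A) * B).mulVec (u τ))
      (volume.restrict (Set.Ioc t0 tf)) := integrable_mulVecAux hEB_cont hsm hsub hu_int
  have hFv_int : Integrable (fun τ => (NormedSpace.exp ((tf - τ) • A) * B).mulVec (v τ))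
      (volume.restrict (Set.Ioc t0 tf)) := integrable_mulVecAux hEB_cont hsm hsub hv_int
  have hFP_int : Integrable (fun τ => (NormedSpace.exp ((tf - τ) • A) * B).mulVec (P τ))
      (volume.restrict (Set.Ioc t0 tf)) := integrable_mulVecAux hEB_cont hsm hsub hP_int
  -- the Gramian integrand
  have hN_cont : Continuous fun τ : ℝ =>
      NormedSpace.exp ((tf - τ) • A) * B * Bᵀ * NormedSpace.exp ((-(τ - t0)) • Aᵀ) :=
    ((hEcont.matrix_mul continuous_const).matrix_mul continuous_const).matrix_mul hMcont
  letI : ContinuousENorm (Matrix (Fin n) (Fin n) ℝ) := SeminormedAddGroup.toContinuousENorm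
  have hN_int : Integrable (fun τ : ℝ =>
      NormedSpace.exp ((tf - τ) • A) * B * Bᵀ * NormedSpace.exp ((-(τ - t0)) • Aᵀ))
      (volume.restrict (Set.Ioc t0 tf)) := intContAux hN_cont hsm hsub
  have hGν : G = ∫ τ, (NormedSpace.exp ((tf - τ) • A) * B * Bᵀ *
      NormedSpace.exp ((-(τ - t0)) • Aᵀ)) ∂(volume.restrict (Set.Ioc t0 tf)) := by
    rw [hG, intervalIntegral.integral_of_le ht.le]
  have hFv_val : (∫ τ, (NormedSpace.exp ((tf - τ) • A) * B).mulVec (v τ)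
      ∂(volume.restrict (Set.Ioc t0 tf))) = ytf - xf := by
    have h1 : ∀ τ : ℝ, (NormedSpace.exp ((tf - τ) • A) * B).mulVec (v τ)
        = (mulVecRightCLM lam) (NormedSpace.exp ((tf - τ) • A) * B * Bᵀ *
            NormedSpace.exp ((-(τ - t0)) • Aᵀ)) := by
      intro τ
      show (NormedSpace.exp ((tf - τ) • A) * B).mulVec
          ((Bᵀ * NormedSpace.exp ((-(τ - t0)) • Aᵀ)).mulVec lam) = _
      rw [Matrix.mulVec_mulVec, mulVecRightCLM_apply]
      simp only [Matrix.mul_assoc]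
    calc (∫ τ, (NormedSpace.exp ((tf - τ) • A) * B).mulVec (v τ)
          ∂(volume.restrict (Set.Ioc t0 tf)))
        = ∫ τ, (mulVecRightCLM lam) (NormedSpace.exp ((tf - τ) • A) * B * Bᵀ *
            NormedSpace.exp ((-(τ - t0)) • Aᵀ)) ∂(volume.restrict (Set.Ioc t0 tf)) :=
          integral_congr_ae (Filter.Eventually.of_forall fun τ => h1 τ)
      _ = (mulVecRightCLM lam) (∫ τ, (NormedSpace.exp ((tf - τ) • A) * B * Bᵀ *
            NormedSpace.exp ((-(τ - t0)) • Aᵀ)) ∂(volume.restrict (Set.Ioc t0 tf))) :=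
          (mulVecRightCLM lam).integral_comp_comm hN_int
      _ = G.mulVec lam := by rw [← hGν, mulVecRightCLM_apply]
      _ = ytf - xf := by
          rw [hlam, Matrix.mulVec_mulVec,
            Matrix.mul_nonsing_inv _ ((Matrix.isUnit_iff_isUnit_det G).mp hGinv),
            Matrix.one_mulVec]
  -- feasibility of P
  have hfeasP : (NormedSpace.exp ((tf - t0) • A)).mulVec x0 +
      (∫ τ in t0..tf, (NormedSpace.exp ((tf - τ) • A)).mulVec (B.mulVec (P τ))) = xf := by
    rw [hconv P]
    have h2 : ∀ τ : ℝ, (NormedSpace.exp ((tf - τ) • A) * B).mulVec (P τ)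
        = (NormedSpace.exp ((tf - τ) • A) * B).mulVec (u τ)
          - (NormedSpace.exp ((tf - τ) • A) * B).mulVec (v τ) := by
      intro τ; rw [hPv τ, Matrix.mulVec_sub]
    have h3 : (∫ τ, (NormedSpace.exp ((tf - τ) • A) * B).mulVec (P τ)
        ∂(volume.restrict (Set.Ioc t0 tf)))
        = (∫ τ, (NormedSpace.exp ((tf - τ) • A) * B).mulVec (u τ)
            ∂(volume.restrict (Set.Ioc t0 tf))) - (ytf - xf) := by
      simp_rw [h2]
      rw [integral_sub hFu_int hFv_int, hFv_val]
    rw [h3]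
    have hytf' : ytf = (NormedSpace.exp ((tf - t0) • A)).mulVec x0 +
        ∫ τ, (NormedSpace.exp ((tf - τ) • A) * B).mulVec (u τ)
          ∂(volume.restrict (Set.Ioc t0 tf)) := by
      rw [hytf, hconv u]
    rw [hytf']
    abel
  refine ⟨⟨hP_mem, hfeasP⟩, ?_⟩
  -- optimality
  intro y hy hyfeas
  have hy_int : Integrable y (volume.restrict (Set.Ioc t0 tf)) :=
    (hy.integrable one_le_two).mono_measure (Measure.restrict_mono hsub le_rfl)
  have hFy_int : Integrable (fun τ => (NormedSpace.exp ((tf - τ) • A) * B).mulVec (y τ))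
      (volume.restrict (Set.Ioc t0 tf)) := integrable_mulVecAux hEB_cont hsm hsub hy_int
  have hw_int : Integrable (fun t => P t - y t) (volume.restrict (Set.Ioc t0 tf)) :=
    hP_int.sub hy_int
  have hFw_int : Integrable (fun τ => (NormedSpace.exp ((tf - τ) • A) * B).mulVec (P τ - y τ))
      (volume.restrict (Set.Ioc t0 tf)) := integrable_mulVecAux hEB_cont hsm hsub hw_int
  have hFPval : (∫ τ, (NormedSpace.exp ((tf - τ) • A) * B).mulVec (P τ)
      ∂(volume.restrict (Set.Ioc t0 tf)))
      = xf - (NormedSpace.exp ((tf - t0) • A)).mulVec x0 := by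
    have := hfeasP
    rw [hconv P] at this
    exact eq_sub_of_add_eq' this
  have hFyval : (∫ τ, (NormedSpace.exp ((tf - τ) • A) * B).mulVec (y τ)
      ∂(volume.restrict (Set.Ioc t0 tf)))
      = xf - (NormedSpace.exp ((tf - t0) • A)).mulVec x0 := by
    have := hyfeas
    rw [hconv y] at this
    exact eq_sub_of_add_eq' this
  have hFw0 : (∫ τ, (NormedSpace.exp ((tf - τ) • A) * B).mulVec (P τ - y τ)
      ∂(volume.restrict (Set.Ioc t0 tf))) = 0 := by
    simp_rw [Matrix.mulVec_sub]
    rw [integral_sub hFP_int hFy_int, hFPval, hFyval, sub_self]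
  -- the cross term vanishes
  have hdot : ∀ t : ℝ, v t ⬝ᵥ (P t - y t)
      = lam ⬝ᵥ (NormedSpace.exp ((t0 - tf) • A)).mulVec
          ((NormedSpace.exp ((tf - t) • A) * B).mulVec (P t - y t)) := by
    intro t
    have hMtr : (NormedSpace.exp ((-(t - t0)) • Aᵀ))ᵀ = NormedSpace.exp ((-(t - t0)) • A) := by
      rw [show ((-(t - t0)) • Aᵀ) = ((-(t - t0)) • A)ᵀ from (Matrix.transpose_smul _ _).symm,
        Matrix.exp_transpose, Matrix.transpose_transpose]
    have hsplit : NormedSpace.exp ((-(t - t0)) • A)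
        = NormedSpace.exp ((t0 - tf) • A) * NormedSpace.exp ((tf - t) • A) := by
      rw [show (-(t - t0)) • A = (t0 - tf) • A + (tf - t) • A by
        rw [← add_smul]; congr 1; ring]
      exact Matrix.exp_add_of_commute _ _ (((Commute.refl A).smul_left _).smul_right _)
    calc v t ⬝ᵥ (P t - y t)
        = ((Bᵀ * NormedSpace.exp ((-(t - t0)) • Aᵀ)).mulVec lam) ⬝ᵥ (P t - y t) := rfl
      _ = (lam ᵥ* (Bᵀ * NormedSpace.exp ((-(t - t0)) • Aᵀ))ᵀ) ⬝ᵥ (P t - y t) := by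
          rw [Matrix.vecMul_transpose]
      _ = lam ⬝ᵥ ((Bᵀ * NormedSpace.exp ((-(t - t0)) • Aᵀ))ᵀ).mulVec (P t - y t) :=
          (Matrix.dotProduct_mulVec _ _ _).symm
      _ = lam ⬝ᵥ (NormedSpace.exp ((t0 - tf) • A) * NormedSpace.exp ((tf - t) • A)
            * B).mulVec (P t - y t) := by
          rw [Matrix.transpose_mul, Matrix.transpose_transpose, hMtr, hsplit]
      _ = lam ⬝ᵥ (NormedSpace.exp ((t0 - tf) • A)).mulVec
            ((NormedSpace.exp ((tf - t) • A) * B).mulVec (P t - y t)) := by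
          rw [Matrix.mul_assoc, ← Matrix.mulVec_mulVec]
  have hcross : (∫ t, v t ⬝ᵥ (P t - y t) ∂(volume.restrict (Set.Ioc t0 tf))) = 0 := by
    have hL : ∀ t : ℝ, v t ⬝ᵥ (P t - y t)
        = ((dotCLM lam).comp (mulVecCLM (NormedSpace.exp ((t0 - tf) • A))))
            ((NormedSpace.exp ((tf - t) • A) * B).mulVec (P t - y t)) := by
      intro t
      rw [hdot t]
      rfl
    simp_rw [hL]
    rw [((dotCLM lam).comp
      (mulVecCLM (NormedSpace.exp ((t0 - tf) • A)))).integral_comp_comm hFw_int, hFw0]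
    simp
  -- final comparison
  rw [intervalIntegral.integral_of_le ht.le, intervalIntegral.integral_of_le ht.le]
  have hL : ∀ t : ℝ, (∑ i, (u t i - P t i) ^ 2) = ∑ i, (v t i) ^ 2 := by
    intro t
    refine Finset.sum_congr rfl fun i _ => ?_
    rw [hPv t]
    simp [Pi.sub_apply, sub_sub_cancel]
  have hR : ∀ t : ℝ, (∑ i, (u t i - y t i) ^ 2)
      = (∑ i, (v t i) ^ 2) + (2 * (v t ⬝ᵥ (P t - y t)) + ∑ i, ((P t - y t) i) ^ 2) := by
    intro t
    rw [dotProduct, Finset.mul_sum, ← Finset.sum_add_distrib, ← Finset.sum_add_distrib]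
    refine Finset.sum_congr rfl fun i _ => ?_
    have hc : u t i - y t i = v t i + (P t i - y t i) := by
      rw [hPv t]
      simp [Pi.sub_apply]
      ring
    rw [hc]
    simp [Pi.sub_apply]
    ring
  simp_rw [hL, hR]
  have hIv : Integrable (fun t => ∑ i, (v t i) ^ 2) (volume.restrict (Set.Ioc t0 tf)) := by
    refine intContAux ?_ hsm hsub
    exact continuous_finset_sum _ fun i _ => ((continuous_apply i).comp hvcont).pow 2
  have hIc : Integrable (fun t => 2 * (v t ⬝ᵥ (P t - y t)))
      (volume.restrict (Set.Ioc t0 tf)) := by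
    have h1 : Integrable (fun t => v t ⬝ᵥ (P t - y t)) (volume.restrict (Set.Ioc t0 tf)) := by
      have hL : ∀ t : ℝ, v t ⬝ᵥ (P t - y t)
          = ((dotCLM lam).comp (mulVecCLM (NormedSpace.exp ((t0 - tf) • A))))
              ((NormedSpace.exp ((tf - t) • A) * B).mulVec (P t - y t)) := by
        intro t
        rw [hdot t]
        rfl
      simp_rw [hL]
      exact ((dotCLM lam).comp
        (mulVecCLM (NormedSpace.exp ((t0 - tf) • A)))).integrable_comp hFw_int
    exact h1.const_mul 2
  have hIw : Integrable (fun t => ∑ i, ((P t - y t) i) ^ 2)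
      (volume.restrict (Set.Ioc t0 tf)) := by
    refine integrable_finset_sum _ fun i _ => ?_
    have h1 : MemLp (fun t => (P t - y t) i) 2 (volume.restrict (Set.Icc t0 tf)) :=
      (ContinuousLinearMap.proj (R := ℝ) (φ := fun _ : Fin m => ℝ) i).comp_memLp'
        (hP_mem.sub hy)
    exact h1.integrable_sq.mono_measure (Measure.restrict_mono hsub le_rfl)
  have hsplit1 := integral_add (μ := volume.restrict (Set.Ioc t0 tf)) hIv (hIc.add hIw)
  have hsplit2 := integral_add (μ := volume.restrict (Set.Ioc t0 tf)) hIc hIw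
  simp only [Pi.add_apply] at hsplit1 hsplit2
  rw [hsplit1, hsplit2]
  have h2c : (∫ t, 2 * (v t ⬝ᵥ (P t - y t)) ∂(volume.restrict (Set.Ioc t0 tf))) = 0 := by
    rw [integral_const_mul, hcross, mul_zero]
  rw [h2c, zero_add]
  have hwnn : 0 ≤ ∫ t, ∑ i, ((P t - y t) i) ^ 2 ∂(volume.restrict (Set.Ioc t0 tf)) :=
    integral_nonneg fun t => Finset.sum_nonneg fun i _ => sq_nonneg _
  linarith
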